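/- Let W be the lazy random walk on a finite simple connected graph G = (V,E) with stationary distribution π. Fix k ∈ ℕ and s ∈ ℕ with s ≥ t_mix + 1, where t_mix is the uniform (ℓ∞, 1/4) mixing time. Let A_1,...,A_k ⊂ ℕ be finite intervals with min(A_1) ≥ s and min(A_{i+1}) − max(A_i) ≥ s for all i. Then for every nonnegative function F on the product path space and every starting vertex ρ: E_ρ[F(W(A_1),...,W(A_k))] ≤ 2^k · E[F(W_1(A_1),...,W_k(A_k))], where W_1,...,W_k are independent lazy random walks each started from π. The reverse inequality holds with factor 2^{-k}. -/

import Mathlib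

open Finset
set_option linter.unusedSectionVars false

variable {V : Type*} [Fintype V] [DecidableEq V] [Nonempty V]

/-- One-step transition kernel of the lazy random walk on `G`:
stay put with probability `1/2`, otherwise move to a uniformly chosen neighbour. -/
noncomputable def lazyStep (G : SimpleGraph V) [DecidableRel G.Adj] (x y : V) : ℝ :=
  if x = y then 1 / 2 else if G.Adj x y then 1 / (2 * (G.degree x : ℝ)) else 0

/-- `n`-step transition probabilities of the lazy random walk. -/
noncomputable def lazyProb (G : SimpleGraph V) [DecidableRel G.Adj] : ℕ → V → V → ℝ
  | 0, x, y => if x = y then 1 else 0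
  | n + 1, x, y => ∑ z : V, lazyStep G x z * lazyProb G n z y

/-- The stationary (degree-biased) distribution `π(x) = deg(x)/(2#E)`. -/
noncomputable def statDist (G : SimpleGraph V) [DecidableRel G.Adj] (x : V) : ℝ :=
  (G.degree x : ℝ) / (2 * (G.edgeFinset.card : ℝ))

/-- The uniform `(ℓ∞, 1/4)` mixing time. -/
noncomputable def tmix (G : SimpleGraph V) [DecidableRel G.Adj] : ℕ :=
  sInf {n : ℕ | ∀ x y : V, |lazyProb G n x y / statDist G y - 1| ≤ 1 / 4}

/-- Extension of a finite path to all of `ℕ` (constant after time `N`). -/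
def extPath (N : ℕ) (γ : Fin (N + 1) → V) : ℕ → V :=
  fun n => γ ⟨min n N, Nat.lt_succ_of_le (min_le_right n N)⟩

/-- Weight of a finite path under the lazy random walk kernel. -/
noncomputable def pathWeight (G : SimpleGraph V) [DecidableRel G.Adj]
    (N : ℕ) (γ : Fin (N + 1) → V) : ℝ :=
  ∏ i ∈ Finset.range N, lazyStep G (extPath N γ i) (extPath N γ (i + 1))

open Classical in
/-- Probability, for the lazy random walk started at `ρ`, of a path event
depending only on the first `N+1` coordinates. -/
noncomputable def walkProb (G : SimpleGraph V) [DecidableRel G.Adj]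
    (ρ : V) (N : ℕ) (E : (ℕ → V) → Prop) : ℝ :=
  ∑ γ : Fin (N + 1) → V,
    if extPath N γ 0 = ρ ∧ E (extPath N γ) then pathWeight G N γ else 0

open Classical in
/-- Expectation, for the lazy random walk started at `ρ`, of a path functional
depending only on the first `N+1` coordinates. -/
noncomputable def walkExp (G : SimpleGraph V) [DecidableRel G.Adj]
    (ρ : V) (N : ℕ) (f : (ℕ → V) → ℝ) : ℝ :=
  ∑ γ : Fin (N + 1) → V,
    if extPath N γ 0 = ρ then pathWeight G N γ * f (extPath N γ) else 0

open Classical in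
/-- Probability of a path event for the lazy random walk started from `π`. -/
noncomputable def walkProbStat (G : SimpleGraph V) [DecidableRel G.Adj]
    (N : ℕ) (E : (ℕ → V) → Prop) : ℝ :=
  ∑ γ : Fin (N + 1) → V,
    if E (extPath N γ) then statDist G (extPath N γ 0) * pathWeight G N γ else 0

/-- Expectation of a path functional for the lazy random walk started from `π`. -/
noncomputable def walkExpStat (G : SimpleGraph V) [DecidableRel G.Adj]
    (N : ℕ) (f : (ℕ → V) → ℝ) : ℝ :=
  ∑ γ : Fin (N + 1) → V,
    statDist G (extPath N γ 0) * pathWeight G N γ * f (extPath N γ)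

open Classical in
/-- Probability of a joint event for two independent lazy random walks,
each started from the stationary distribution. -/
noncomputable def twoWalkProbStat (G : SimpleGraph V) [DecidableRel G.Adj]
    (N : ℕ) (E : (ℕ → V) → (ℕ → V) → Prop) : ℝ :=
  ∑ γ₁ : Fin (N + 1) → V, ∑ γ₂ : Fin (N + 1) → V,
    if E (extPath N γ₁) (extPath N γ₂) then
      (statDist G (extPath N γ₁ 0) * pathWeight G N γ₁) *
      (statDist G (extPath N γ₂ 0) * pathWeight G N γ₂) else 0

open Classical in
/-- Probability of a joint event for two independent lazy random walks,
both started at the vertex `ρ`. -/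
noncomputable def twoWalkProbFrom (G : SimpleGraph V) [DecidableRel G.Adj]
    (ρ : V) (N : ℕ) (E : (ℕ → V) → (ℕ → V) → Prop) : ℝ :=
  ∑ γ₁ : Fin (N + 1) → V, ∑ γ₂ : Fin (N + 1) → V,
    if extPath N γ₁ 0 = ρ ∧ extPath N γ₂ 0 = ρ ∧ E (extPath N γ₁) (extPath N γ₂) then
      pathWeight G N γ₁ * pathWeight G N γ₂ else 0

/-- Range of a path over a finite set of times. -/
def walkRange (w : ℕ → V) (A : Finset ℕ) : Finset V := A.image w

/-- `q̄^G(s)`: averaged intersection probability of two independent lazy walks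
started at the same (uniform) vertex. -/
noncomputable def qbar (G : SimpleGraph V) [DecidableRel G.Adj] (s : ℕ) : ℝ :=
  (1 / (Fintype.card V : ℝ)) * ∑ ρ : V,
    twoWalkProbFrom G ρ s (fun w₁ w₂ =>
      (walkRange w₁ (Finset.Icc 0 s) ∩ walkRange w₂ (Finset.Icc 1 s)).Nonempty)

/-- `H^W_ρ(m) = Σ_{i=0}^m Σ_{j=0}^m P_ρ(W(i+j)=ρ)`. -/
noncomputable def HW (G : SimpleGraph V) [DecidableRel G.Adj] (ρ : V) (m : ℕ) : ℝ :=
  ∑ i ∈ Finset.range (m + 1), ∑ j ∈ Finset.range (m + 1), lazyProb G (i + j) ρ ρ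

/-- Expectation of a functional of `k` independent lazy random walks,
each started from the stationary distribution. -/
noncomputable def indepWalksExp (G : SimpleGraph V) [DecidableRel G.Adj]
    (k N : ℕ) (F : (Fin k → ℕ → V) → ℝ) : ℝ :=
  ∑ γ : Fin k → Fin (N + 1) → V,
    (∏ i : Fin k, statDist G (extPath N (γ i) 0) * pathWeight G N (γ i)) *
      F (fun i => extPath N (γ i))

section Aux
variable (G : SimpleGraph V) [DecidableRel G.Adj]

lemma lazyStep_nonneg (x y : V) : 0 ≤ lazyStep G x y := by
  unfold lazyStep; split_ifs <;> positivity

lemma lazyStep_split (x y : V) :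
    lazyStep G x y = (if x = y then (1:ℝ)/2 else 0)
      + (if G.Adj x y then 1 / (2 * (G.degree x : ℝ)) else 0) := by
  unfold lazyStep
  by_cases h : x = y
  · subst h; simp [G.irrefl]
  · simp [h]

variable {G}

lemma sum_lazyStep (hdeg : ∀ v : V, 0 < G.degree v) (x : V) :
    ∑ y, lazyStep G x y = 1 := by
  have hd : (G.degree x : ℝ) ≠ 0 := by exact_mod_cast (hdeg x).ne'
  rw [Finset.sum_congr rfl (fun y _ => lazyStep_split G x y), Finset.sum_add_distrib]
  have h1 : (∑ y : V, if x = y then (1:ℝ)/2 else 0) = 1/2 := by simp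
  have h2 : (∑ y : V, if G.Adj x y then 1 / (2 * (G.degree x : ℝ)) else 0)
      = (G.degree x : ℝ) * (1 / (2 * (G.degree x : ℝ))) := by
    rw [← Finset.sum_filter, ← SimpleGraph.neighborFinset_eq_filter,
      Finset.sum_const, SimpleGraph.card_neighborFinset_eq_degree, nsmul_eq_mul]
  rw [h1, h2]
  field_simp
  ring


lemma degree_pos (hconn : G.Connected) (hcard : 2 ≤ Fintype.card V) (x : V) :
    0 < G.degree x := by
  rw [G.degree_pos_iff_exists_adj]
  obtain ⟨y, hy⟩ := Fintype.exists_ne_of_one_lt_card (by omega) x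
  obtain ⟨p⟩ := hconn x y
  cases p with
  | nil => exact absurd rfl hy
  | cons h q => exact ⟨_, h⟩

lemma edgeCard_pos (hdeg : ∀ v : V, 0 < G.degree v) : 0 < G.edgeFinset.card := by
  have h := G.sum_degrees_eq_twice_card_edges
  by_contra hc
  push_neg at hc
  interval_cases h' : G.edgeFinset.card
  · obtain ⟨x⟩ := ‹Nonempty V›
    have := Finset.sum_pos (fun v _ => hdeg v) ⟨x, Finset.mem_univ x⟩
    omega

lemma statDist_nonneg (x : V) : 0 ≤ statDist G x := by
  unfold statDist; positivity

lemma statDist_pos (hdeg : ∀ v : V, 0 < G.degree v) (x : V) : 0 < statDist G x := by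
  unfold statDist
  have h1 := hdeg x
  have h2 := edgeCard_pos hdeg
  have : (0:ℝ) < (G.degree x : ℝ) := by exact_mod_cast h1
  have : (0:ℝ) < (G.edgeFinset.card : ℝ) := by exact_mod_cast h2
  positivity

lemma sum_statDist (hdeg : ∀ v : V, 0 < G.degree v) : ∑ x, statDist G x = 1 := by
  unfold statDist
  rw [← Finset.sum_div]
  have h := G.sum_degrees_eq_twice_card_edges
  have h2 := edgeCard_pos hdeg
  have hx : (∑ x : V, (G.degree x : ℝ)) = 2 * (G.edgeFinset.card : ℝ) := by
    exact_mod_cast congrArg (Nat.cast : ℕ → ℝ) h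
  rw [hx]
  have : (0:ℝ) < (G.edgeFinset.card : ℝ) := by exact_mod_cast h2
  exact div_self (by positivity)

lemma statDist_le_one (hdeg : ∀ v : V, 0 < G.degree v) (x : V) : statDist G x ≤ 1 := by
  have := sum_statDist (G := G) hdeg
  calc statDist G x ≤ ∑ y, statDist G y :=
        Finset.single_le_sum (fun y _ => statDist_nonneg y) (Finset.mem_univ x)
    _ = 1 := this

lemma statDist_step (hdeg : ∀ v : V, 0 < G.degree v) (y : V) :
    ∑ x, statDist G x * lazyStep G x y = statDist G y := by
  have key : ∀ x, statDist G x * lazyStep G x y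
      = (if x = y then statDist G y * (1/2) else 0)
        + (if G.Adj x y then 1 / (2 * (2 * (G.edgeFinset.card : ℝ))) else 0) := by
    intro x
    rw [lazyStep_split, mul_add]
    congr 1
    · by_cases h : x = y <;> simp [h]
    · by_cases h : G.Adj x y
      · have hdx : (G.degree x : ℝ) ≠ 0 := by exact_mod_cast (hdeg x).ne'
        simp only [h, if_true]
        unfold statDist
        have hE : (0:ℝ) < (G.edgeFinset.card : ℝ) := by exact_mod_cast edgeCard_pos hdeg
        have hdx0 : (0:ℝ) < (G.degree x : ℝ) := by exact_mod_cast hdeg x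
        rw [div_mul_div_comm, div_eq_div_iff (by positivity) (by positivity)]
        ring
      · simp [h]
  rw [Finset.sum_congr rfl (fun x _ => key x), Finset.sum_add_distrib]
  have h1 : (∑ x : V, if x = y then statDist G y * (1/2) else 0) = statDist G y * (1/2) := by
    simp
  have h2 : (∑ x : V, if G.Adj x y then 1 / (2 * (2 * (G.edgeFinset.card : ℝ))) else 0)
      = (G.degree y : ℝ) * (1 / (2 * (2 * (G.edgeFinset.card : ℝ)))) := by
    have hsym : ∀ x : V, G.Adj x y ↔ G.Adj y x := fun x => ⟨fun h => G.adj_symm h, fun h => G.adj_symm h⟩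
    simp only [hsym]
    rw [← Finset.sum_filter, ← SimpleGraph.neighborFinset_eq_filter,
      Finset.sum_const, SimpleGraph.card_neighborFinset_eq_degree, nsmul_eq_mul]
  rw [h1, h2]
  unfold statDist
  have h2' := edgeCard_pos hdeg
  have hE : (0:ℝ) < (G.edgeFinset.card : ℝ) := by exact_mod_cast h2'
  field_simp
  ring

lemma lazyProb_nonneg (n : ℕ) (x y : V) : 0 ≤ lazyProb G n x y := by
  induction n generalizing x with
  | zero => unfold lazyProb; split_ifs <;> norm_num
  | succ n ih =>
    unfold lazyProb
    exact Finset.sum_nonneg fun z _ => mul_nonneg (lazyStep_nonneg G x z) (ih z)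

lemma sum_lazyProb (hdeg : ∀ v : V, 0 < G.degree v) (n : ℕ) (x : V) :
    ∑ y, lazyProb G n x y = 1 := by
  induction n generalizing x with
  | zero => simp [lazyProb]
  | succ n ih =>
    unfold lazyProb
    calc (∑ y, ∑ z, lazyStep G x z * lazyProb G n z y)
        = ∑ z, lazyStep G x z * ∑ y, lazyProb G n z y := by
          rw [Finset.sum_comm]; simp [Finset.mul_sum]
      _ = 1 := by simp only [ih]; simpa using sum_lazyStep hdeg x

lemma lazyProb_chapman (m n : ℕ) (x y : V) :
    lazyProb G (m + n) x y = ∑ z, lazyProb G m x z * lazyProb G n z y := by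
  induction m generalizing x with
  | zero =>
    simp only [Nat.zero_add, lazyProb]
    rw [Finset.sum_eq_single x]
    · simp
    · intro z _ hz; simp [Ne.symm hz]
    · intro h; exact absurd (Finset.mem_univ x) h
  | succ m ih =>
    have : m + 1 + n = (m + n) + 1 := by omega
    rw [this]
    show (∑ z : V, lazyStep G x z * lazyProb G (m + n) z y) = _
    rw [Finset.sum_congr rfl (fun z _ => by rw [ih z])]
    show (∑ z : V, lazyStep G x z * ∑ w, lazyProb G m z w * lazyProb G n w y) = _
    rw [Finset.sum_congr rfl (fun z _ => Finset.mul_sum _ _ _), Finset.sum_comm]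
    refine Finset.sum_congr rfl fun w _ => ?_
    show (∑ z : V, lazyStep G x z * (lazyProb G m z w * lazyProb G n w y)) = _
    rw [show (lazyProb G (m+1) x w) = ∑ z, lazyStep G x z * lazyProb G m z w from rfl,
      Finset.sum_mul]
    exact Finset.sum_congr rfl fun z _ => by ring

lemma statDist_lazyProb (hdeg : ∀ v : V, 0 < G.degree v) (n : ℕ) (y : V) :
    ∑ x, statDist G x * lazyProb G n x y = statDist G y := by
  induction n generalizing y with
  | zero =>
    simp only [lazyProb]
    rw [Finset.sum_eq_single y] <;> simp +contextual [eq_comm]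
  | succ n ih =>
    show (∑ x, statDist G x * ∑ z, lazyStep G x z * lazyProb G n z y) = _
    rw [Finset.sum_congr rfl (fun x _ => Finset.mul_sum _ _ _), Finset.sum_comm]
    calc (∑ z, ∑ x, statDist G x * (lazyStep G x z * lazyProb G n z y))
        = ∑ z, (∑ x, statDist G x * lazyStep G x z) * lazyProb G n z y := by
          refine Finset.sum_congr rfl fun z _ => ?_
          rw [Finset.sum_mul]
          exact Finset.sum_congr rfl fun x _ => by ring
      _ = ∑ z, statDist G z * lazyProb G n z y := by
          simp only [statDist_step hdeg]
      _ = statDist G y := ih y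


lemma lazyStep_self (x : V) : lazyStep G x x = 1/2 := by simp [lazyStep]

lemma lazyStep_pos_adj {x y : V} (h : G.Adj x y) : 0 < lazyStep G x y := by
  have hd : 0 < G.degree x := G.degree_pos_iff_exists_adj x |>.2 ⟨y, h⟩
  have : (0:ℝ) < (G.degree x : ℝ) := by exact_mod_cast hd
  unfold lazyStep
  rw [if_neg h.ne, if_pos h]
  positivity

lemma lazyProb_pos : ∀ n (x y : V), (∃ p : G.Walk x y, p.length ≤ n) → 0 < lazyProb G n x y := by
  intro n
  induction n with
  | zero =>
    rintro x y ⟨p, hp⟩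
    have hxy := p.eq_of_length_eq_zero (Nat.le_zero.mp hp)
    subst hxy
    simp [lazyProb]
  | succ n ih =>
    rintro x y ⟨p, hp⟩
    show 0 < ∑ z : V, lazyStep G x z * lazyProb G n z y
    cases p with
    | nil =>
      refine Finset.sum_pos' (fun z _ => mul_nonneg (lazyStep_nonneg G x z) (lazyProb_nonneg n z x)) ?_
      refine ⟨x, Finset.mem_univ x, ?_⟩
      have h1 : 0 < lazyStep G x x := by rw [lazyStep_self]; norm_num
      exact mul_pos h1 (ih x x ⟨SimpleGraph.Walk.nil, Nat.zero_le n⟩)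
    | @cons _ z _ h q =>
      refine Finset.sum_pos' (fun w _ => mul_nonneg (lazyStep_nonneg G x w) (lazyProb_nonneg n w y)) ?_
      refine ⟨z, Finset.mem_univ z, ?_⟩
      have hq : q.length ≤ n := by
        have := hp; rw [SimpleGraph.Walk.length_cons] at this; omega
      exact mul_pos (lazyStep_pos_adj h) (ih z y ⟨q, hq⟩)

lemma lazyProb_card_pos (hconn : G.Connected) (x y : V) :
    0 < lazyProb G (Fintype.card V) x y := by
  obtain ⟨p⟩ := hconn x y
  exact lazyProb_pos _ x y ⟨p.toPath, le_of_lt p.toPath.2.length_lt⟩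

lemma contraction_step (hdeg : ∀ v : V, 0 < G.degree v) {m : ℕ} {δ : ℝ}
    (hδ : 0 < δ) (hδ1 : δ ≤ 1)
    (hminor : ∀ x z : V, δ * statDist G z ≤ lazyProb G m x z)
    {c : ℝ} (hc : 0 ≤ c) {n : ℕ}
    (hn : ∀ z y : V, |lazyProb G n z y / statDist G y - 1| ≤ c) :
    ∀ x y : V, |lazyProb G (m + n) x y / statDist G y - 1| ≤ (1 - δ) * c := by
  intro x y
  have hπy : 0 < statDist G y := statDist_pos hdeg y
  have expand : lazyProb G (m + n) x y / statDist G y - 1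
      = ∑ z, (lazyProb G m x z - δ * statDist G z) * (lazyProb G n z y / statDist G y - 1) := by
    have e1 : ∀ z : V, (lazyProb G m x z - δ * statDist G z) * (lazyProb G n z y / statDist G y - 1)
        = lazyProb G m x z * lazyProb G n z y / statDist G y - lazyProb G m x z
          - δ * ((statDist G z * lazyProb G n z y) / statDist G y) + δ * statDist G z := by
      intro z; field_simp; ring
    rw [Finset.sum_congr rfl (fun z _ => e1 z), Finset.sum_add_distrib,
      Finset.sum_sub_distrib, Finset.sum_sub_distrib, ← Finset.sum_div, ← Finset.mul_sum,
      ← Finset.mul_sum, ← Finset.sum_div, statDist_lazyProb hdeg, sum_lazyProb hdeg,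
      sum_statDist hdeg, ← lazyProb_chapman]
    field_simp
    ring
  rw [expand]
  calc |∑ z, (lazyProb G m x z - δ * statDist G z) * (lazyProb G n z y / statDist G y - 1)|
      ≤ ∑ z, |(lazyProb G m x z - δ * statDist G z) * (lazyProb G n z y / statDist G y - 1)| :=
        Finset.abs_sum_le_sum_abs _ _
    _ ≤ ∑ z, (lazyProb G m x z - δ * statDist G z) * c := by
        refine Finset.sum_le_sum fun z _ => ?_
        rw [abs_mul, abs_of_nonneg (sub_nonneg.mpr (hminor x z))]
        exact mul_le_mul_of_nonneg_left (hn z y) (sub_nonneg.mpr (hminor x z))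
    _ = (1 - δ) * c := by
        rw [← Finset.sum_mul, Finset.sum_sub_distrib, sum_lazyProb hdeg, ← Finset.mul_sum,
          sum_statDist hdeg, mul_one]

lemma mixing_nonempty (hconn : G.Connected) (hcard : 2 ≤ Fintype.card V) :
    {n : ℕ | ∀ x y : V, |lazyProb G n x y / statDist G y - 1| ≤ 1/4}.Nonempty := by
  have hdeg : ∀ v : V, 0 < G.degree v := fun v => degree_pos hconn hcard v
  set m := Fintype.card V with hm
  have hne : (Finset.univ ×ˢ Finset.univ : Finset (V × V)).Nonempty := by
    obtain ⟨x⟩ := ‹Nonempty V›; exact ⟨(x, x), by simp⟩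
  set δ₁ := Finset.inf' _ hne (fun q : V × V => lazyProb G m q.1 q.2 / statDist G q.2) with hδ₁
  have hδ₁pos : 0 < δ₁ := by
    rw [hδ₁, Finset.lt_inf'_iff]
    intro q _
    exact div_pos (lazyProb_card_pos hconn q.1 q.2) (statDist_pos hdeg q.2)
  set δ := min δ₁ 1 with hδdef
  have hδpos : 0 < δ := lt_min hδ₁pos one_pos
  have hδ1 : δ ≤ 1 := min_le_right _ _
  have hminor : ∀ x z : V, δ * statDist G z ≤ lazyProb G m x z := by
    intro x z
    have h1 : δ ≤ lazyProb G m x z / statDist G z := by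
      refine le_trans (min_le_left _ _) ?_
      exact Finset.inf'_le _ (by simp : (x, z) ∈ Finset.univ ×ˢ Finset.univ)
    exact (le_div_iff₀ (statDist_pos hdeg z)).mp h1
  set C := 2 * (G.edgeFinset.card : ℝ) with hC
  have hE1 : 1 ≤ G.edgeFinset.card := edgeCard_pos hdeg
  have hC1 : 1 ≤ C := by
    rw [hC]
    have : (1:ℝ) ≤ (G.edgeFinset.card : ℝ) := by exact_mod_cast hE1
    linarith
  have hC0 : 0 < C := by linarith
  have base : ∀ x y : V, |lazyProb G 0 x y / statDist G y - 1| ≤ C := by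
    intro x y
    have hπ : 0 < statDist G y := statDist_pos hdeg y
    have hπle : statDist G y ≤ 1 := statDist_le_one hdeg y
    show |(if x = y then (1:ℝ) else 0) / statDist G y - 1| ≤ C
    by_cases h : x = y
    · rw [if_pos h]
      have h1 : 1 ≤ 1 / statDist G y := by rw [le_div_iff₀ hπ]; linarith
      rw [abs_of_nonneg (by linarith)]
      have h2 : 1 / statDist G y ≤ C := by
        have hd1 : 1 ≤ G.degree y := hdeg y
        have hd1' : (1:ℝ) ≤ (G.degree y : ℝ) := by exact_mod_cast hd1
        rw [hC]
        unfold statDist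
        rw [one_div_div]
        calc 2 * (G.edgeFinset.card : ℝ) / (G.degree y : ℝ) ≤ 2 * (G.edgeFinset.card : ℝ) :=
          div_le_self (by positivity) hd1'
        _ = 2 * (G.edgeFinset.card : ℝ) := rfl
      linarith
    · rw [if_neg h]
      rw [zero_div, zero_sub, abs_neg, abs_one]
      linarith
  have iter : ∀ j : ℕ, ∀ x y : V, |lazyProb G (j * m) x y / statDist G y - 1| ≤ (1 - δ)^j * C := by
    intro j
    induction j with
    | zero => simpa using base
    | succ j ih =>
      have hnext := contraction_step hdeg hδpos hδ1 hminor
        (c := (1 - δ)^j * C) (mul_nonneg (pow_nonneg (by linarith) j) (le_of_lt hC0)) ih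
      intro x y
      have h2 := hnext x y
      have e1 : m + j * m = (j + 1) * m := by ring
      have e2 : (1 - δ) * ((1 - δ)^j * C) = (1 - δ)^(j+1) * C := by ring
      rw [e1, e2] at h2
      exact h2
  obtain ⟨j, hj⟩ : ∃ j : ℕ, (1 - δ)^j * C < 1/4 := by
    obtain ⟨j, hj⟩ := exists_pow_lt_of_lt_one (show (0:ℝ) < 1/(4*C) by positivity)
      (show 1 - δ < 1 by linarith)
    refine ⟨j, ?_⟩
    have := mul_lt_mul_of_pos_right hj hC0
    calc (1 - δ)^j * C < 1/(4*C) * C := this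
      _ = 1/4 := by field_simp
  exact ⟨j * m, fun x y => le_trans (iter j x y) (le_of_lt hj)⟩

lemma tmix_spec (hconn : G.Connected) (hcard : 2 ≤ Fintype.card V) {n : ℕ} (hn : tmix G ≤ n) :
    ∀ x y : V, |lazyProb G n x y / statDist G y - 1| ≤ 1/4 := by
  have hdeg : ∀ v : V, 0 < G.degree v := fun v => degree_pos hconn hcard v
  have hmem := Nat.sInf_mem (mixing_nonempty hconn hcard)
  have step : ∀ k : ℕ, (∀ x y : V, |lazyProb G k x y / statDist G y - 1| ≤ 1/4) →
      ∀ x y : V, |lazyProb G (k+1) x y / statDist G y - 1| ≤ 1/4 := by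
    intro k hk x y
    have expand : lazyProb G (k+1) x y / statDist G y - 1
        = ∑ z, lazyStep G x z * (lazyProb G k z y / statDist G y - 1) := by
      have e0 : lazyProb G (k+1) x y = ∑ z, lazyStep G x z * lazyProb G k z y := rfl
      rw [Finset.sum_congr rfl (fun z _ => mul_sub (lazyStep G x z) (lazyProb G k z y / statDist G y) 1),
        Finset.sum_sub_distrib]
      simp only [mul_one, sum_lazyStep hdeg]
      rw [Finset.sum_congr rfl (fun z (_ : z ∈ Finset.univ) =>
        (mul_div_assoc (lazyStep G x z) (lazyProb G k z y) (statDist G y)).symm),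
        ← Finset.sum_div, ← e0]
    rw [expand]
    calc |∑ z, lazyStep G x z * (lazyProb G k z y / statDist G y - 1)|
        ≤ ∑ z, |lazyStep G x z * (lazyProb G k z y / statDist G y - 1)| :=
          Finset.abs_sum_le_sum_abs _ _
      _ ≤ ∑ z, lazyStep G x z * (1/4) := by
          refine Finset.sum_le_sum fun z _ => ?_
          rw [abs_mul, abs_of_nonneg (lazyStep_nonneg G x z)]
          exact mul_le_mul_of_nonneg_left (hk z y) (lazyStep_nonneg G x z)
      _ = 1/4 := by rw [← Finset.sum_mul, sum_lazyStep hdeg, one_mul]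
  exact Nat.le_induction hmem (fun k _ ih => step k ih) n hn

lemma mix_bounds (hconn : G.Connected) (hcard : 2 ≤ Fintype.card V) {n : ℕ}
    (hn : tmix G ≤ n) (x y : V) :
    lazyProb G n x y ≤ 2 * statDist G y ∧ statDist G y ≤ 2 * lazyProb G n x y := by
  have hdeg : ∀ v : V, 0 < G.degree v := fun v => degree_pos hconn hcard v
  have h := tmix_spec hconn hcard hn x y
  have hπ : 0 < statDist G y := statDist_pos hdeg y
  rw [abs_le] at h
  obtain ⟨h1, h2⟩ := h
  have hu : lazyProb G n x y ≤ 5/4 * statDist G y := by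
    have := (div_le_iff₀ hπ).mp (by linarith : lazyProb G n x y / statDist G y ≤ 5/4)
    linarith
  have hl : 3/4 * statDist G y ≤ lazyProb G n x y := by
    have := (le_div_iff₀ hπ).mp (by linarith : (3:ℝ)/4 ≤ lazyProb G n x y / statDist G y)
    linarith
  constructor <;> linarith

end Aux

/-- Prepend a vertex to an infinite path. -/
def hd (x : V) (w : ℕ → V) : ℕ → V := fun t => if t = 0 then x else w (t - 1)

/-- Concatenate two infinite paths at time `t`. -/
def splice (t : ℕ) (w₁ w₂ : ℕ → V) : ℕ → V := fun n => if n ≤ t then w₁ n else w₂ (n - t)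

/-- Expectation of a path functional for the lazy walk run for `n` steps from `x`
(the path is extended to be constant after time `n`). -/
noncomputable def Ew (G : SimpleGraph V) [DecidableRel G.Adj] :
    ℕ → V → ((ℕ → V) → ℝ) → ℝ
  | 0, x, f => f (fun _ => x)
  | n + 1, x, f => ∑ y, lazyStep G x y * Ew G n y (fun w => f (hd x w))

section EwLemmas
variable {G : SimpleGraph V} [DecidableRel G.Adj]

lemma hd_zero (x : V) (w : ℕ → V) : hd x w 0 = x := rfl

lemma hd_succ (x : V) (w : ℕ → V) (n : ℕ) : hd x w (n + 1) = w n := rfl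

lemma Ew_nonneg {f : (ℕ → V) → ℝ} (hf : ∀ w, 0 ≤ f w) (n : ℕ) (x : V) :
    0 ≤ Ew G n x f := by
  induction n generalizing x f with
  | zero => exact hf _
  | succ n ih =>
    exact Finset.sum_nonneg fun y _ =>
      mul_nonneg (lazyStep_nonneg G x y) (ih (fun w => hf (hd x w)) y)

lemma Ew_mono {f g : (ℕ → V) → ℝ} (hfg : ∀ w, f w ≤ g w) (n : ℕ) (x : V) :
    Ew G n x f ≤ Ew G n x g := by
  induction n generalizing x f g with
  | zero => exact hfg _
  | succ n ih =>
    refine Finset.sum_le_sum fun y _ => ?_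
    exact mul_le_mul_of_nonneg_left (ih (fun w => hfg (hd x w)) y) (lazyStep_nonneg G x y)

lemma Ew_smul (c : ℝ) (f : (ℕ → V) → ℝ) (n : ℕ) (x : V) :
    Ew G n x (fun w => c * f w) = c * Ew G n x f := by
  induction n generalizing x f with
  | zero => rfl
  | succ n ih =>
    show (∑ y, lazyStep G x y * Ew G n y (fun w => c * f (hd x w)))
      = c * ∑ y, lazyStep G x y * Ew G n y (fun w => f (hd x w))
    rw [Finset.mul_sum]
    refine Finset.sum_congr rfl fun y _ => ?_
    rw [ih]
    ring

lemma Ew_const (hdeg : ∀ v : V, 0 < G.degree v) (c : ℝ) (n : ℕ) (x : V) :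
    Ew G n x (fun _ => c) = c := by
  induction n generalizing x with
  | zero => rfl
  | succ n ih =>
    show (∑ y, lazyStep G x y * Ew G n y (fun _ => c)) = c
    simp only [ih]
    rw [← Finset.sum_mul, sum_lazyStep hdeg, one_mul]

lemma Ew_start {f g : (ℕ → V) → ℝ} (n : ℕ) (x : V)
    (h : ∀ w, w 0 = x → f w = g w) : Ew G n x f = Ew G n x g := by
  cases n with
  | zero => exact h _ rfl
  | succ n =>
    show (∑ y, lazyStep G x y * Ew G n y (fun w => f (hd x w))) = _
    refine Finset.sum_congr rfl fun y _ => ?_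
    congr 1
    exact congrArg (Ew G n y) (funext fun w => h (hd x w) rfl)

lemma Ew_tail (hdeg : ∀ v : V, 0 < G.degree v) {f : (ℕ → V) → ℝ} (n u : ℕ) (x : V)
    (hf : ∀ w w' : ℕ → V, (∀ i, i ≤ n → w i = w' i) → f w = f w') :
    Ew G (n + u) x f = Ew G n x f := by
  induction n generalizing x f with
  | zero =>
    rw [Nat.zero_add]
    have h1 : Ew G u x f = Ew G u x (fun _ => f (fun _ => x)) := by
      refine Ew_start u x fun w hw => ?_
      exact hf w (fun _ => x) (fun i hi => by
        interval_cases i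
        exact hw)
    rw [h1, Ew_const hdeg]
    rfl
  | succ n ih =>
    have e : n + 1 + u = (n + u) + 1 := by omega
    rw [e]
    show (∑ y, lazyStep G x y * Ew G (n + u) y (fun w => f (hd x w)))
      = ∑ y, lazyStep G x y * Ew G n y (fun w => f (hd x w))
    refine Finset.sum_congr rfl fun y _ => ?_
    congr 1
    refine ih y fun w w' hww' => ?_
    refine hf (hd x w) (hd x w') fun i hi => ?_
    cases i with
    | zero => rfl
    | succ j => exact hww' j (by omega)

lemma splice_hd (t : ℕ) (x : V) (w₁ w₂ : ℕ → V) :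
    splice (t + 1) (hd x w₁) w₂ = hd x (splice t w₁ w₂) := by
  funext n
  cases n with
  | zero => simp [splice, hd]
  | succ j =>
    simp only [splice, hd, Nat.add_sub_cancel, Nat.succ_ne_zero, if_false]
    by_cases h : j ≤ t
    · rw [if_pos (by omega : j + 1 ≤ t + 1), if_pos h]
    · rw [if_neg (by omega : ¬ j + 1 ≤ t + 1), if_neg h]
      congr 1
      omega

lemma Ew_split (t u : ℕ) (x : V) (f : (ℕ → V) → ℝ) :
    Ew G (t + u) x f
      = Ew G t x (fun w₁ => Ew G u (w₁ t) (fun w₂ => f (splice t w₁ w₂))) := by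
  induction t generalizing x f with
  | zero =>
    rw [Nat.zero_add]
    show Ew G u x f = Ew G u ((fun _ => x) 0) (fun w₂ => f (splice 0 (fun _ => x) w₂))
    refine (Ew_start u x fun w hw => ?_).symm
    congr 1
    funext n
    cases n with
    | zero => simpa [splice] using hw.symm
    | succ j => simp [splice]
  | succ t ih =>
    have e : t + 1 + u = (t + u) + 1 := by omega
    rw [e]
    show (∑ y, lazyStep G x y * Ew G (t + u) y (fun w => f (hd x w)))
      = ∑ y, lazyStep G x y * Ew G t y
          (fun w₁ => Ew G u ((hd x w₁) (t + 1)) (fun w₂ => f (splice (t + 1) (hd x w₁) w₂)))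
    refine Finset.sum_congr rfl fun y _ => ?_
    congr 1
    rw [ih]
    refine congrArg (Ew G t y) (funext fun w₁ => ?_)
    rw [hd_succ]
    refine congrArg (Ew G u (w₁ t)) (funext fun w₂ => ?_)
    rw [splice_hd]

lemma Ew_dist (t : ℕ) (x : V) (h : V → ℝ) :
    Ew G t x (fun w => h (w t)) = ∑ y, lazyProb G t x y * h y := by
  induction t generalizing x with
  | zero =>
    show h x = ∑ y, (if x = y then (1:ℝ) else 0) * h y
    rw [Finset.sum_eq_single x] <;> simp +contextual [eq_comm]
  | succ t ih =>
    show (∑ z, lazyStep G x z * Ew G t z (fun w => h (hd x w (t + 1)))) = _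
    have e1 : ∀ z : V, Ew G t z (fun w => h (hd x w (t + 1))) = ∑ y, lazyProb G t z y * h y :=
      fun z => ih z
    rw [Finset.sum_congr rfl fun z _ => by rw [e1 z]]
    simp only [Finset.mul_sum]
    rw [Finset.sum_comm]
    refine Finset.sum_congr rfl fun y _ => ?_
    show (∑ z, lazyStep G x z * (lazyProb G t z y * h y)) = lazyProb G (t+1) x y * h y
    rw [show lazyProb G (t+1) x y = ∑ z, lazyStep G x z * lazyProb G t z y from rfl,
      Finset.sum_mul]
    exact Finset.sum_congr rfl fun z _ => by ring

lemma Ew_seg (u M : ℕ) (x : V) {f : (ℕ → V) → ℝ}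
    (hf : ∀ w w' : ℕ → V, (∀ n, u ≤ n → w n = w' n) → f w = f w') :
    Ew G (u + M) x f
      = ∑ y, lazyProb G u x y * Ew G M y (fun w => f (fun n => w (n - u))) := by
  rw [Ew_split u M x f]
  have key : ∀ w₁ : ℕ → V,
      Ew G M (w₁ u) (fun w₂ => f (splice u w₁ w₂))
        = Ew G M (w₁ u) (fun w₂ => f (fun n => w₂ (n - u))) := by
    intro w₁
    refine Ew_start M (w₁ u) fun w₂ hw₂ => ?_
    refine hf _ _ fun n hn => ?_
    simp only [splice]
    by_cases h : n ≤ u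
    · have : n = u := le_antisymm h hn
      subst this
      rw [if_pos le_rfl, Nat.sub_self, hw₂]
    · rw [if_neg h]
  rw [show (fun w₁ => Ew G M (w₁ u) (fun w₂ => f (splice u w₁ w₂)))
      = (fun w₁ : ℕ → V => Ew G M (w₁ u) (fun w₂ => f (fun n => w₂ (n - u)))) from funext key]
  exact Ew_dist u x (fun y => Ew G M y (fun w => f (fun n => w (n - u))))

end EwLemmas

section PathSum
variable {G : SimpleGraph V} [DecidableRel G.Adj]

lemma extPath_cons (N : ℕ) (y : V) (γ : Fin (N + 1) → V) :
    extPath (N + 1) (Fin.cons y γ) = hd y (extPath N γ) := by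
  funext n
  cases n with
  | zero =>
    have h0 : extPath (N + 1) (Fin.cons y γ) 0 = (Fin.cons y γ : Fin (N + 2) → V) 0 := by
      unfold extPath; congr 1
    rw [h0, Fin.cons_zero]
    rfl
  | succ m =>
    have h1 : extPath (N + 1) (Fin.cons y γ) (m + 1)
        = (Fin.cons y γ : Fin (N + 2) → V) (Fin.succ ⟨min m N, Nat.lt_succ_of_le (min_le_right _ _)⟩) := by
      unfold extPath; congr 1; ext; simp [Nat.succ_min_succ]
    rw [h1, Fin.cons_succ]
    rfl

lemma pathWeight_cons (N : ℕ) (y : V) (γ : Fin (N + 1) → V) :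
    pathWeight G (N + 1) (Fin.cons y γ)
      = lazyStep G y (extPath N γ 0) * pathWeight G N γ := by
  unfold pathWeight
  rw [Finset.prod_range_succ']
  simp only [extPath_cons, hd_succ, hd_zero]
  ring

lemma sum_paths (N : ℕ) (x : V) (f : (ℕ → V) → ℝ) :
    (∑ γ : Fin (N + 1) → V,
      if extPath N γ 0 = x then pathWeight G N γ * f (extPath N γ) else 0)
      = Ew G N x f := by
  induction N generalizing x f with
  | zero =>
    rw [← Equiv.sum_comp (Equiv.funUnique (Fin 1) V).symm
      (fun γ : Fin 1 → V => if extPath 0 γ 0 = x then pathWeight G 0 γ * f (extPath 0 γ) else 0)]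
    show (∑ v : V, if extPath 0 (fun _ => v) 0 = x
        then pathWeight G 0 (fun _ => v) * f (extPath 0 (fun _ => v)) else 0) = f (fun _ => x)
    have h2 : ∀ v : V, pathWeight G 0 (fun _ : Fin 1 => v) = 1 := fun v => Finset.prod_range_zero _
    have h1 : ∀ v : V, extPath 0 (fun _ : Fin 1 => v) = fun _ => v := fun v => rfl
    simp only [h1, h2, one_mul]
    rw [Finset.sum_eq_single x] <;> simp +contextual [eq_comm]
  | succ N ih =>
    rw [← Equiv.sum_comp (Fin.consEquiv (fun _ : Fin (N + 2) => V))
      (fun γ : Fin (N + 2) → V =>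
        if extPath (N + 1) γ 0 = x then pathWeight G (N + 1) γ * f (extPath (N + 1) γ) else 0),
      Fintype.sum_prod_type]
    have ce : ∀ (y : V) (γ : Fin (N + 1) → V),
        (Fin.consEquiv (fun _ : Fin (N + 2) => V)) (y, γ) = Fin.cons y γ := fun _ _ => rfl
    simp only [ce]
    have key : ∀ (y : V) (γ : Fin (N + 1) → V),
        (if extPath (N + 1) (Fin.cons y γ) 0 = x
          then pathWeight G (N + 1) (Fin.cons y γ) * f (extPath (N + 1) (Fin.cons y γ)) else 0)
        = if y = x then lazyStep G y (extPath N γ 0) * (pathWeight G N γ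
            * f (hd y (extPath N γ))) else 0 := by
      intro y γ
      rw [extPath_cons, pathWeight_cons, hd_zero, mul_assoc]
    simp only [key]
    have step1 : (∑ y : V, ∑ γ : Fin (N + 1) → V,
        if y = x then lazyStep G y (extPath N γ 0) * (pathWeight G N γ
            * f (hd y (extPath N γ))) else 0)
        = ∑ γ : Fin (N + 1) → V,
            lazyStep G x (extPath N γ 0) * (pathWeight G N γ * f (hd x (extPath N γ))) := by
      rw [Finset.sum_comm]
      refine Finset.sum_congr rfl fun γ _ => ?_
      rw [Finset.sum_eq_single x] <;> simp +contextual [eq_comm]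
    rw [step1]
    show _ = ∑ z, lazyStep G x z * Ew G N z (fun w => f (hd x w))
    have rhs : ∀ z : V, lazyStep G x z * Ew G N z (fun w => f (hd x w))
        = ∑ γ : Fin (N + 1) → V, (if extPath N γ 0 = z
            then lazyStep G x z * (pathWeight G N γ * f (hd x (extPath N γ))) else 0) := by
      intro z
      rw [← ih z (fun w => f (hd x w)), Finset.mul_sum]
      exact Finset.sum_congr rfl fun γ _ => by
        by_cases h : extPath N γ 0 = z <;> simp [h]
    rw [Finset.sum_congr rfl fun z (_ : z ∈ (Finset.univ : Finset V)) => rhs z, Finset.sum_comm]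
    refine Finset.sum_congr rfl fun γ _ => ?_
    rw [Finset.sum_eq_single (extPath N γ 0)]
    · rw [if_pos rfl]
    · intro z _ hz
      rw [if_neg (fun h => hz h.symm)]
    · intro h; exact absurd (Finset.mem_univ _) h

lemma sum_paths_stat (N : ℕ) (f : (ℕ → V) → ℝ) :
    (∑ γ : Fin (N + 1) → V,
      statDist G (extPath N γ 0) * pathWeight G N γ * f (extPath N γ))
      = ∑ x, statDist G x * Ew G N x f := by
  have h1 : ∀ x : V, statDist G x * Ew G N x f
      = ∑ γ : Fin (N + 1) → V, (if extPath N γ 0 = x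
          then statDist G x * (pathWeight G N γ * f (extPath N γ)) else 0) := by
    intro x
    rw [← sum_paths N x f, Finset.mul_sum]
    exact Finset.sum_congr rfl fun γ _ => by
      by_cases h : extPath N γ 0 = x <;> simp [h]
  rw [Finset.sum_congr rfl fun x (_ : x ∈ (Finset.univ : Finset V)) => h1 x, Finset.sum_comm]
  refine Finset.sum_congr rfl fun γ _ => ?_
  rw [Finset.sum_eq_single (extPath N γ 0)]
  · rw [if_pos rfl, mul_assoc]
  · intro z _ hz; rw [if_neg (fun h => hz h.symm)]
  · intro h; exact absurd (Finset.mem_univ _) h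

lemma stat_seg (hdeg : ∀ v : V, 0 < G.degree v) (u v N : ℕ) (huv : u ≤ v) (hvN : v ≤ N)
    (g : (ℕ → V) → ℝ)
    (hg : ∀ w w' : ℕ → V, (∀ n, u ≤ n → n ≤ v → w n = w' n) → g w = g w') :
    (∑ x, statDist G x * Ew G N x g)
      = ∑ x, statDist G x * Ew G (v - u) x (fun w => g (fun n => w (n - u))) := by
  have hdep : ∀ w w' : ℕ → V, (∀ n, u ≤ n → w n = w' n) → g w = g w' :=
    fun w w' hww' => hg w w' fun n h1 _ => hww' n h1
  have tail : ∀ x : V, Ew G N x g = Ew G (u + (v - u)) x g := by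
    intro x
    have e : N = (u + (v - u)) + (N - v) := by omega
    rw [e]
    exact Ew_tail hdeg _ _ x fun w w' hww' =>
      hg w w' fun n h1 h2 => hww' n (by omega)
  have seg : ∀ x : V, Ew G (u + (v - u)) x g
      = ∑ y, lazyProb G u x y * Ew G (v - u) y (fun w => g (fun n => w (n - u))) := by
    intro x
    exact Ew_seg u (v - u) x hdep
  rw [Finset.sum_congr rfl fun x (_ : x ∈ (Finset.univ : Finset V)) => by rw [tail x, seg x]]
  rw [Finset.sum_congr rfl fun x (_ : x ∈ (Finset.univ : Finset V)) => Finset.mul_sum _ _ _,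
    Finset.sum_comm]
  refine Finset.sum_congr rfl fun y _ => ?_
  have := statDist_lazyProb (G := G) hdeg u y
  calc (∑ x, statDist G x * (lazyProb G u x y * Ew G (v - u) y (fun w => g (fun n => w (n - u)))))
      = (∑ x, statDist G x * lazyProb G u x y) * Ew G (v - u) y (fun w => g (fun n => w (n - u))) := by
        rw [Finset.sum_mul]
        exact Finset.sum_congr rfl fun x _ => by ring
    _ = _ := by rw [this]

end PathSum

/-- Canonical form: `k` independent stationary walk segments of lengths `ℓ i`. -/
noncomputable def Can (G : SimpleGraph V) [DecidableRel G.Adj] :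
    (k : ℕ) → (Fin k → ℕ) → ((Fin k → ℕ → V) → ℝ) → ℝ
  | 0, _, F => F (fun i => i.elim0)
  | k + 1, ℓ, F => ∑ x, statDist G x * Ew G (ℓ 0) x
      (fun w => Can G k (fun i => ℓ i.succ) (fun h => F (Fin.cons w h)))

section CanLemmas
variable {G : SimpleGraph V} [DecidableRel G.Adj]

lemma Can_nonneg : ∀ (k : ℕ) (ℓ : Fin k → ℕ) (F : (Fin k → ℕ → V) → ℝ),
    (∀ g, 0 ≤ F g) → 0 ≤ Can G k ℓ F := by
  intro k
  induction k with
  | zero => intro ℓ F hF; exact hF _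
  | succ k ih =>
    intro ℓ F hF
    refine Finset.sum_nonneg fun x _ => mul_nonneg (statDist_nonneg x) ?_
    exact Ew_nonneg (fun w => ih _ _ (fun g => hF _)) _ _

lemma Can_smul : ∀ (k : ℕ) (ℓ : Fin k → ℕ) (c : ℝ) (F : (Fin k → ℕ → V) → ℝ),
    Can G k ℓ (fun h => c * F h) = c * Can G k ℓ F := by
  intro k
  induction k with
  | zero => intro ℓ c F; rfl
  | succ k ih =>
    intro ℓ c F
    show (∑ x, statDist G x * Ew G (ℓ 0) x
        (fun w => Can G k (fun i => ℓ i.succ) (fun h => c * F (Fin.cons w h))))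
      = c * ∑ x, statDist G x * Ew G (ℓ 0) x
        (fun w => Can G k (fun i => ℓ i.succ) (fun h => F (Fin.cons w h)))
    rw [Finset.mul_sum]
    refine Finset.sum_congr rfl fun x _ => ?_
    have e : ∀ w : ℕ → V, Can G k (fun i => ℓ i.succ) (fun h => c * F (Fin.cons w h))
        = c * Can G k (fun i => ℓ i.succ) (fun h => F (Fin.cons w h)) := fun w => ih _ c _
    rw [congrArg (Ew G (ℓ 0) x) (funext e), Ew_smul]
    ring

end CanLemmas


section IndepCan
variable {G : SimpleGraph V} [DecidableRel G.Adj]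

lemma indep_eq_can (hdeg : ∀ v : V, 0 < G.degree v) (N : ℕ) :
    ∀ (k : ℕ) (a b : Fin k → ℕ), (∀ i, a i ≤ b i) → (∀ i, b i ≤ N) →
    ∀ F : (Fin k → ℕ → V) → ℝ,
    (∀ g g' : Fin k → ℕ → V,
      (∀ i : Fin k, ∀ n ∈ Finset.Icc (a i) (b i), g i n = g' i n) → F g = F g') →
    indepWalksExp G k N F
      = Can G k (fun i => b i - a i) (fun h => F (fun i n => h i (n - a i))) := by
  intro k
  induction k with
  | zero =>
    intro a b hab hN F hFdep
    unfold indepWalksExp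
    rw [Fintype.sum_subsingleton _ (fun i : Fin 0 => (fun _ : Fin (N + 1) => Classical.arbitrary V))]
    show (∏ i : Fin 0, _) * F _ = Can G 0 _ _
    rw [Finset.univ_eq_empty, Finset.prod_empty, one_mul]
    show F _ = F _
    exact congrArg F (funext fun i => i.elim0)
  | succ k ih =>
    intro a b hab hN F hFdep
    -- nested form
    have nest : indepWalksExp G (k + 1) N F
        = ∑ γ0 : Fin (N + 1) → V, statDist G (extPath N γ0 0) * pathWeight G N γ0
            * indepWalksExp G k N (fun h => F (Fin.cons (extPath N γ0) h)) := by
      unfold indepWalksExp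
      rw [← Equiv.sum_comp (Fin.consEquiv (fun _ : Fin (k + 1) => Fin (N + 1) → V))
        (fun γ : Fin (k + 1) → Fin (N + 1) → V =>
          (∏ i, statDist G (extPath N (γ i) 0) * pathWeight G N (γ i))
            * F (fun i => extPath N (γ i))),
        Fintype.sum_prod_type]
      refine Finset.sum_congr rfl fun γ0 _ => ?_
      rw [Finset.mul_sum]
      refine Finset.sum_congr rfl fun γ' _ => ?_
      have hce : (Fin.consEquiv (fun _ : Fin (k + 1) => Fin (N + 1) → V)) (γ0, γ')
          = Fin.cons γ0 γ' := rfl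
      simp only [hce]
      rw [Fin.prod_univ_succ]
      simp only [Fin.cons_zero, Fin.cons_succ]
      have hcomp : (fun i => extPath N ((Fin.cons γ0 γ' : Fin (k+1) → Fin (N+1) → V) i))
          = Fin.cons (extPath N γ0) (fun i => extPath N (γ' i)) := by
        funext i
        refine Fin.cases ?_ (fun j => ?_) i
        · rw [Fin.cons_zero, Fin.cons_zero]
        · rw [Fin.cons_succ, Fin.cons_succ]
      rw [hcomp]
      ring
    rw [nest]
    set gbig : (ℕ → V) → ℝ :=
      fun w => indepWalksExp G k N (fun h => F (Fin.cons w h)) with hgbig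
    have hgdep : ∀ w w' : ℕ → V, (∀ n, a 0 ≤ n → n ≤ b 0 → w n = w' n) → gbig w = gbig w' := by
      intro w w' hww'
      rw [hgbig]
      unfold indepWalksExp
      refine Finset.sum_congr rfl fun γ _ => ?_
      congr 1
      refine hFdep _ _ fun i n hn => ?_
      revert hn
      refine Fin.cases ?_ (fun j => ?_) i <;> intro hn
      · rw [Fin.cons_zero, Fin.cons_zero]
        rw [Finset.mem_Icc] at hn
        exact hww' n hn.1 hn.2
      · rw [Fin.cons_succ, Fin.cons_succ]
    have step2 := sum_paths_stat (G := G) N gbig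
    rw [step2, stat_seg hdeg (a 0) (b 0) N (hab 0) (hN 0) gbig hgdep]
    -- now identify with Can (k+1)
    show _ = ∑ x, statDist G x * Ew G ((fun i => b i - a i) 0) x
        (fun w => Can G k (fun i => b i.succ - a i.succ)
          (fun h => F (fun i n => (Fin.cons w h : Fin (k+1) → ℕ → V) i (n - a i))))
    refine Finset.sum_congr rfl fun x _ => ?_
    congr 1
    refine congrArg (Ew G _ x) (funext fun w => ?_)
    have happ := ih (fun i => a i.succ) (fun i => b i.succ) (fun i => hab i.succ)
      (fun i => hN i.succ) (fun h => F (Fin.cons (fun n => w (n - a 0)) h))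
      (fun g g' hgg' => hFdep _ _ fun i n hn => by
        revert hn
        refine Fin.cases ?_ (fun j => ?_) i <;> intro hn
        · rw [Fin.cons_zero, Fin.cons_zero]
        · rw [Fin.cons_succ, Fin.cons_succ]
          exact hgg' j n hn)
    show indepWalksExp G k N (fun h => F (Fin.cons (fun n => w (n - a 0)) h)) = _
    rw [happ]
    refine congrArg (Can G k _) (funext fun h => congrArg F (funext fun i => ?_))
    refine Fin.cases ?_ (fun j => ?_) i
    · funext n
      rw [Fin.cons_zero]
      show w (n - a 0) = (Fin.cons (w : ℕ → V) h : Fin (k+1) → ℕ → V) 0 (n - a 0)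
      rw [Fin.cons_zero]
    · funext n
      rw [Fin.cons_succ]
      show h j (n - a j.succ) = (Fin.cons (w : ℕ → V) h : Fin (k+1) → ℕ → V) j.succ (n - a j.succ)
      rw [Fin.cons_succ]

end IndepCan

section MainInd
variable {G : SimpleGraph V} [DecidableRel G.Adj]

lemma main_ineq (hdeg : ∀ v : V, 0 < G.degree v) (s : ℕ)
    (hmixU : ∀ n, s ≤ n → ∀ x y : V, lazyProb G n x y ≤ 2 * statDist G y)
    (hmixL : ∀ n, s ≤ n → ∀ x y : V, statDist G y ≤ 2 * lazyProb G n x y)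
    (hs1 : 1 ≤ s) :
    ∀ (k : ℕ) (a b : Fin k → ℕ) (N : ℕ),
      (∀ i, a i ≤ b i) →
      (∀ i : Fin k, (i : ℕ) = 0 → s ≤ a i) →
      (∀ i j : Fin k, (j : ℕ) = (i : ℕ) + 1 → b i + s ≤ a j) →
      (∀ i, b i ≤ N) →
      ∀ F : (Fin k → ℕ → V) → ℝ, (∀ g, 0 ≤ F g) →
      (∀ g g' : Fin k → ℕ → V,
        (∀ i : Fin k, ∀ n ∈ Finset.Icc (a i) (b i), g i n = g' i n) → F g = F g') →
      ∀ x : V,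
        Ew G N x (fun w => F (fun _ => w))
          ≤ 2 ^ k * Can G k (fun i => b i - a i) (fun h => F (fun i n => h i (n - a i)))
        ∧ ((1:ℝ)/2) ^ k * Can G k (fun i => b i - a i) (fun h => F (fun i n => h i (n - a i)))
          ≤ Ew G N x (fun w => F (fun _ => w)) := by
  intro k
  induction k with
  | zero =>
    intro a b N hab h0 hsep hN F hF0 hFdep x
    have e : (fun w : ℕ → V => F (fun _ => w)) = fun _ => F (fun i => i.elim0) :=
      funext fun w => congrArg F (funext fun i => i.elim0)
    have e2 : Can G 0 (fun i => b i - a i) (fun h => F (fun i n => h i (n - a i)))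
        = F (fun i => i.elim0) := congrArg F (funext fun i => i.elim0)
    rw [e, Ew_const hdeg, e2, pow_zero, pow_zero, one_mul]
    exact ⟨le_refl _, le_refl _⟩
  | succ k ih =>
    intro a b N hab h0 hsep hN F hF0 hFdep x
    have ha0s : s ≤ a 0 := h0 0 rfl
    have hab0 : a 0 ≤ b 0 := hab 0
    have hb0N : b 0 ≤ N := hN 0
    -- chain bounds
    have hb0aux : ∀ m (h : m < k + 1), 1 ≤ m → b 0 + s ≤ a ⟨m, h⟩ := by
      intro m
      induction m with
      | zero => intro h h1; omega
      | succ m ihm =>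
        intro h h1
        have h' : m < k + 1 := by omega
        have h3 := hsep ⟨m, h'⟩ ⟨m + 1, h⟩ rfl
        rcases Nat.eq_zero_or_pos m with hm | hm
        · subst hm
          have e0 : (⟨0, h'⟩ : Fin (k + 1)) = 0 := by ext; simp
          rw [e0] at h3
          exact h3
        · have h2 := ihm h' hm
          have h4 := hab ⟨m, h'⟩
          omega
    have hb0a : ∀ i : Fin (k + 1), 1 ≤ (i : ℕ) → b 0 + s ≤ a i := by
      intro i hi
      have := hb0aux i.1 i.2 hi
      simpa using this
    have hamono : ∀ i : Fin (k + 1), a 0 ≤ a i := by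
      intro i
      rcases Nat.eq_zero_or_pos (i : ℕ) with h | h
      · have : i = 0 := Fin.ext (by simpa using h)
        rw [this]
      · have h2 := hb0a i h
        omega
    have hsuccb0 : ∀ j : Fin k, b 0 + s ≤ a j.succ := by
      intro j
      refine hb0a j.succ ?_
      rw [Fin.val_succ]
      omega
    -- Step A : split off the initial stretch [0, a 0]
    have fdep : ∀ w w' : ℕ → V, (∀ n, a 0 ≤ n → w n = w' n)
        → F (fun _ => w) = F (fun _ => w') := by
      intro w w' h
      refine hFdep _ _ fun i n hn => ?_
      rw [Finset.mem_Icc] at hn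
      exact h n (le_trans (hamono i) hn.1)
    have segA : Ew G N x (fun w => F (fun _ => w))
        = ∑ y, lazyProb G (a 0) x y *
            Ew G (N - a 0) y (fun w => F (fun _ => fun n => w (n - a 0))) := by
      conv_lhs => rw [show N = a 0 + (N - a 0) by omega]
      exact Ew_seg (a 0) (N - a 0) x fdep
    -- Step C : split at time b 0 - a 0
    have hsplit : ∀ y : V, Ew G (N - a 0) y (fun w => F (fun _ => fun n => w (n - a 0)))
        = Ew G (b 0 - a 0) y (fun w₁ => Ew G (N - b 0) (w₁ (b 0 - a 0))
            (fun w₂ => F (fun _ => fun n => splice (b 0 - a 0) w₁ w₂ (n - a 0)))) := by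
      intro y
      rw [show N - a 0 = (b 0 - a 0) + (N - b 0) by omega, Ew_split]
    -- Step D : inner functional identification
    have hinner : ∀ w₁ w₂ : ℕ → V,
        F (fun _ => fun n => splice (b 0 - a 0) w₁ w₂ (n - a 0))
          = F (Fin.cons (fun n => w₁ (n - a 0)) (fun i n => w₂ (n - b 0))) := by
      intro w₁ w₂
      refine hFdep _ _ fun i n hn => ?_
      rw [Finset.mem_Icc] at hn
      revert hn
      refine Fin.cases ?_ (fun j => ?_) i <;> intro hn
      · rw [Fin.cons_zero]
        show splice (b 0 - a 0) w₁ w₂ (n - a 0) = w₁ (n - a 0)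
        unfold splice
        rw [if_pos (by omega)]
      · rw [Fin.cons_succ]
        show splice (b 0 - a 0) w₁ w₂ (n - a 0) = w₂ (n - b 0)
        have h1 := hsuccb0 j
        unfold splice
        rw [if_neg (by omega)]
        congr 1
        omega
    -- IH data
    have hihfull : ∀ w₁ : ℕ → V, ∀ z : V,
        Ew G (N - b 0) z (fun w => (fun h : Fin k → ℕ → V =>
            F (Fin.cons (fun n => w₁ (n - a 0)) (fun i n => h i (n - b 0)))) (fun _ => w))
          ≤ 2 ^ k * Can G k (fun i => (b i.succ - b 0) - (a i.succ - b 0))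
              (fun h => F (Fin.cons (fun n => w₁ (n - a 0))
                (fun i n => h i ((n - b 0) - (a i.succ - b 0)) )))
        ∧ ((1:ℝ)/2) ^ k * Can G k (fun i => (b i.succ - b 0) - (a i.succ - b 0))
              (fun h => F (Fin.cons (fun n => w₁ (n - a 0))
                (fun i n => h i ((n - b 0) - (a i.succ - b 0)) )))
          ≤ Ew G (N - b 0) z (fun w => (fun h : Fin k → ℕ → V =>
            F (Fin.cons (fun n => w₁ (n - a 0)) (fun i n => h i (n - b 0)))) (fun _ => w)) := by
      intro w₁ z
      have h2 := ih (fun i => a i.succ - b 0) (fun i => b i.succ - b 0) (N - b 0)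
        (fun i => by show a i.succ - b 0 ≤ b i.succ - b 0; have := hsuccb0 i; have := hab i.succ; omega)
        (fun i hi => by show s ≤ a i.succ - b 0; have := hsuccb0 i; omega)
        (fun i j hij => by
          have h3 := hsep i.succ j.succ (by rw [Fin.val_succ, Fin.val_succ, hij])
          show b i.succ - b 0 + s ≤ a j.succ - b 0
          have := hsuccb0 i
          have := hsuccb0 j
          have := hab i.succ
          omega)
        (fun i => by show b i.succ - b 0 ≤ N - b 0; have := hN i.succ; have := hsuccb0 i; omega)
        (fun h => F (Fin.cons (fun n => w₁ (n - a 0)) (fun i n => h i (n - b 0))))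
        (fun g => hF0 _)
        (fun g g' hgg' => hFdep _ _ fun i n hn => by
          rw [Finset.mem_Icc] at hn
          revert hn
          refine Fin.cases ?_ (fun j => ?_) i <;> intro hn
          · rw [Fin.cons_zero, Fin.cons_zero]
          · rw [Fin.cons_succ, Fin.cons_succ]
            have hj := hsuccb0 j
            exact hgg' j (n - b 0) (Finset.mem_Icc.mpr
              ⟨by show a j.succ - b 0 ≤ n - b 0; omega, by show n - b 0 ≤ b j.succ - b 0; omega⟩))
        z
      exact h2
    -- translate the IH Can to the final Can form
    have hcan : ∀ w₁ : ℕ → V,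
        Can G k (fun i => (b i.succ - b 0) - (a i.succ - b 0))
          (fun h => F (Fin.cons (fun n => w₁ (n - a 0))
            (fun i n => h i ((n - b 0) - (a i.succ - b 0)) )))
        = Can G k (fun i => b i.succ - a i.succ)
            (fun h => F (fun i n => (Fin.cons w₁ h : Fin (k + 1) → ℕ → V) i (n - a i))) := by
      intro w₁
      have hℓ : (fun i : Fin k => (b i.succ - b 0) - (a i.succ - b 0))
          = fun i => b i.succ - a i.succ := by
        funext i
        have := hsuccb0 i
        have := hab i.succ
        omega
      have hFe : (fun h : Fin k → ℕ → V => F (Fin.cons (fun n => w₁ (n - a 0))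
            (fun i n => h i ((n - b 0) - (a i.succ - b 0)) )))
          = fun h => F (fun i n => (Fin.cons w₁ h : Fin (k + 1) → ℕ → V) i (n - a i)) := by
        funext h
        refine congrArg F (funext fun i => ?_)
        refine Fin.cases ?_ (fun j => ?_) i
        · funext n
          rw [Fin.cons_zero]
          show w₁ (n - a 0) = (Fin.cons (w₁ : ℕ → V) h : Fin (k + 1) → ℕ → V) 0 (n - a 0)
          rw [Fin.cons_zero]
        · funext n
          rw [Fin.cons_succ]
          show h j ((n - b 0) - (a j.succ - b 0))
            = (Fin.cons (w₁ : ℕ → V) h : Fin (k + 1) → ℕ → V) j.succ (n - a j.succ)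
          rw [Fin.cons_succ]
          congr 1
          have := hsuccb0 j
          omega
      rw [hℓ, hFe]
    -- abbreviations
    set D : V → ℝ := fun y => Ew G (b 0 - a 0) y (fun w₁ =>
      Can G k (fun i => b i.succ - a i.succ)
        (fun h => F (fun i n => (Fin.cons w₁ h : Fin (k + 1) → ℕ → V) i (n - a i)))) with hD
    have hCanNonneg : ∀ w₁ : ℕ → V, 0 ≤ Can G k (fun i => b i.succ - a i.succ)
        (fun h => F (fun i n => (Fin.cons w₁ h : Fin (k + 1) → ℕ → V) i (n - a i))) :=
      fun w₁ => Can_nonneg _ _ _ (fun g => hF0 _)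
    have hDnonneg : ∀ y, 0 ≤ D y := fun y => Ew_nonneg (fun w₁ => hCanNonneg w₁) _ _
    have hEwNonneg : ∀ y : V, 0 ≤ Ew G (N - a 0) y
        (fun w => F (fun _ => fun n => w (n - a 0))) :=
      fun y => Ew_nonneg (fun w => hF0 _) _ _
    -- key rewriting of the inner expectation
    have hinnerEw : ∀ y : V, Ew G (N - a 0) y (fun w => F (fun _ => fun n => w (n - a 0)))
        = Ew G (b 0 - a 0) y (fun w₁ => Ew G (N - b 0) (w₁ (b 0 - a 0))
            (fun w₂ => F (Fin.cons (fun n => w₁ (n - a 0)) (fun i n => w₂ (n - b 0))))) := by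
      intro y
      rw [hsplit y]
      refine congrArg (Ew G (b 0 - a 0) y) (funext fun w₁ => ?_)
      exact congrArg (Ew G (N - b 0) (w₁ (b 0 - a 0))) (funext fun w₂ => hinner w₁ w₂)
    -- bounds on the inner expectation
    have hinnerUB : ∀ y : V, Ew G (b 0 - a 0) y (fun w₁ => Ew G (N - b 0) (w₁ (b 0 - a 0))
            (fun w₂ => F (Fin.cons (fun n => w₁ (n - a 0)) (fun i n => w₂ (n - b 0)))))
        ≤ 2 ^ k * D y := by
      intro y
      rw [hD, ← Ew_smul]
      refine Ew_mono (fun w₁ => ?_) _ _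
      have h1 := (hihfull w₁ (w₁ (b 0 - a 0))).1
      rw [hcan w₁] at h1
      exact h1
    have hinnerLB : ∀ y : V, ((1:ℝ)/2) ^ k * D y
        ≤ Ew G (b 0 - a 0) y (fun w₁ => Ew G (N - b 0) (w₁ (b 0 - a 0))
            (fun w₂ => F (Fin.cons (fun n => w₁ (n - a 0)) (fun i n => w₂ (n - b 0))))) := by
      intro y
      rw [hD, ← Ew_smul]
      refine Ew_mono (fun w₁ => ?_) _ _
      have h1 := (hihfull w₁ (w₁ (b 0 - a 0))).2
      rw [hcan w₁] at h1
      exact h1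
    -- final Can identity
    have hCanSucc : Can G (k + 1) (fun i => b i - a i)
        (fun h => F (fun i n => h i (n - a i))) = ∑ y, statDist G y * D y := rfl
    constructor
    · calc Ew G N x (fun w => F (fun _ => w))
          = ∑ y, lazyProb G (a 0) x y *
              Ew G (N - a 0) y (fun w => F (fun _ => fun n => w (n - a 0))) := segA
        _ ≤ ∑ y, lazyProb G (a 0) x y * (2 ^ k * D y) := by
            refine Finset.sum_le_sum fun y _ => ?_
            refine mul_le_mul_of_nonneg_left ?_ (lazyProb_nonneg _ x y)
            rw [hinnerEw y]
            exact hinnerUB y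
        _ ≤ ∑ y, (2 * statDist G y) * (2 ^ k * D y) := by
            refine Finset.sum_le_sum fun y _ => ?_
            refine mul_le_mul_of_nonneg_right (hmixU (a 0) ha0s x y) ?_
            exact mul_nonneg (by positivity) (hDnonneg y)
        _ = 2 ^ (k + 1) * ∑ y, statDist G y * D y := by
            rw [Finset.mul_sum]
            exact Finset.sum_congr rfl fun y _ => by ring
        _ = 2 ^ (k + 1) * Can G (k + 1) (fun i => b i - a i)
              (fun h => F (fun i n => h i (n - a i))) := by rw [hCanSucc]
    · calc ((1:ℝ)/2) ^ (k + 1) * Can G (k + 1) (fun i => b i - a i)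
              (fun h => F (fun i n => h i (n - a i)))
          = ∑ y, ((1/2) * statDist G y) * (((1:ℝ)/2) ^ k * D y) := by
            rw [hCanSucc, Finset.mul_sum]
            exact Finset.sum_congr rfl fun y _ => by ring
        _ ≤ ∑ y, lazyProb G (a 0) x y * (((1:ℝ)/2) ^ k * D y) := by
            refine Finset.sum_le_sum fun y _ => ?_
            refine mul_le_mul_of_nonneg_right ?_ ?_
            · have := hmixL (a 0) ha0s x y
              linarith
            · exact mul_nonneg (by positivity) (hDnonneg y)
        _ ≤ ∑ y, lazyProb G (a 0) x y *
              Ew G (N - a 0) y (fun w => F (fun _ => fun n => w (n - a 0))) := by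
            refine Finset.sum_le_sum fun y _ => ?_
            refine mul_le_mul_of_nonneg_left ?_ (lazyProb_nonneg _ x y)
            rw [hinnerEw y]
            exact hinnerLB y
        _ = Ew G N x (fun w => F (fun _ => w)) := segA.symm

end MainInd

/-- Nearly independent after mixing. -/
theorem nearly_independent_after_mixing
    (G : SimpleGraph V) [DecidableRel G.Adj] (hconn : G.Connected)
    (hcard : 2 ≤ Fintype.card V)
    (k s N : ℕ) (hs : tmix G + 1 ≤ s)
    (a b : Fin k → ℕ) (hab : ∀ i, a i ≤ b i)
    (ha0 : ∀ i : Fin k, (i : ℕ) = 0 → s ≤ a i)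
    (hsep : ∀ i j : Fin k, (j : ℕ) = (i : ℕ) + 1 → b i + s ≤ a j)
    (hN : ∀ i, b i ≤ N)
    (F : (Fin k → ℕ → V) → ℝ) (hF0 : ∀ g, 0 ≤ F g)
    (hFdep : ∀ g g' : Fin k → ℕ → V,
      (∀ i : Fin k, ∀ n ∈ Finset.Icc (a i) (b i), g i n = g' i n) → F g = F g')
    (ρ : V) :
    walkExp G ρ N (fun w => F (fun _ => w)) ≤ 2 ^ k * indepWalksExp G k N F ∧
    ((1 : ℝ) / 2) ^ k * indepWalksExp G k N F ≤ walkExp G ρ N (fun w => F (fun _ => w)) := by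
  have hdeg : ∀ v : V, 0 < G.degree v := fun v => degree_pos hconn hcard v
  have hsx : tmix G ≤ s := by omega
  have hs1 : 1 ≤ s := by omega
  have hmixU : ∀ n, s ≤ n → ∀ x y : V, lazyProb G n x y ≤ 2 * statDist G y :=
    fun n hn x y => (mix_bounds hconn hcard (le_trans hsx hn) x y).1
  have hmixL : ∀ n, s ≤ n → ∀ x y : V, statDist G y ≤ 2 * lazyProb G n x y :=
    fun n hn x y => (mix_bounds hconn hcard (le_trans hsx hn) x y).2
  have hmain := main_ineq hdeg s hmixU hmixL hs1 k a b N hab ha0 hsep hN F hF0 hFdep ρ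
  have hwe : walkExp G ρ N (fun w => F (fun _ => w)) = Ew G N ρ (fun w => F (fun _ => w)) := by
    unfold walkExp
    exact sum_paths (G := G) N ρ (fun w => F (fun _ => w))
  have hie := indep_eq_can hdeg N k a b hab hN F hFdep
  rw [hwe, hie]
  exact hmain
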